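/- Let λ ∈ (0,1), let f : ℝⁿ × ℝᵐ → ℝⁿ be continuous, and let U ⊆ ℝᵐ be compact and nonempty. Suppose B : ℝⁿ → ℝ is continuous and satisfies: (i) max_{u∈U} B(f(x,u)) ≥ λ·B(x) for every x ∈ D; (ii) B(x) ≤ 0 for every x ∈ X_U; and (iii) B(x) > 0 for every x ∈ X_I. Then the system is safe: for every x₀ ∈ X_I there exists a control policy π such that there is no time t ∈ ℕ with φ^π_{x₀}(t) ∈ X_U and φ^π_{x₀}(s) ∈ D for all 0 ≤ s < t. -/

import Mathlib

open MeasureTheory Set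

noncomputable section

/-- Trajectory of the discrete-time control system `x(t+1) = f(x(t), u(t))`. -/
def traj {n m : ℕ} (f : (Fin n → ℝ) → (Fin m → ℝ) → (Fin n → ℝ))
    (x0 : Fin n → ℝ) (π : ℕ → (Fin m → ℝ)) : ℕ → (Fin n → ℝ)
  | 0 => x0
  | t + 1 => f (traj f x0 π t) (π t)

/-- Proposition 4: a maximization-based control barrier certificate implies
safety of the discrete-time control system. -/
theorem stmt_10 {n m : ℕ} (lam : ℝ) (hlam0 : 0 < lam) (hlam1 : lam < 1)
    (f : (Fin n → ℝ) → (Fin m → ℝ) → (Fin n → ℝ))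
    (hf : Continuous fun p : (Fin n → ℝ) × (Fin m → ℝ) => f p.1 p.2)
    (U : Set (Fin m → ℝ)) (hUc : IsCompact U) (hUne : U.Nonempty)
    (D XI XU : Set (Fin n → ℝ)) (hXI : XI ⊆ D) (hXU : XU ⊆ D)
    (hdisj : XI ∩ XU = ∅)
    (B : (Fin n → ℝ) → ℝ) (hB : Continuous B)
    (h1 : ∀ x ∈ D, lam * B x ≤ sSup ((fun u => B (f x u)) '' U))
    (h2 : ∀ x ∈ XU, B x ≤ 0)
    (h3 : ∀ x ∈ XI, 0 < B x) :
    ∀ x0 ∈ XI, ∃ π : ℕ → (Fin m → ℝ), (∀ t, π t ∈ U) ∧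
      ¬ ∃ t : ℕ, traj f x0 π t ∈ XU ∧ ∀ s < t, traj f x0 π s ∈ D := by
  intro x0 hx0
  -- greedy selector
  have hg : ∀ x : Fin n → ℝ, ∃ u ∈ U, ∀ v ∈ U, B (f x v) ≤ B (f x u) := by
    intro x
    obtain ⟨u, hu, hmax⟩ := hUc.exists_isMaxOn hUne
      ((hB.comp (hf.comp (continuous_const.prodMk continuous_id))).continuousOn)
    exact ⟨u, hu, fun v hv => hmax hv⟩
  choose g hgU hgmax using hg
  -- greedy B-increase on D
  have hstep : ∀ x ∈ D, lam * B x ≤ B (f x (g x)) := by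
    intro x hx
    refine (h1 x hx).trans (csSup_le (hUne.image _) ?_)
    rintro y ⟨v, hv, rfl⟩; exact hgmax x v hv
  -- state sequence
  let X : ℕ → (Fin n → ℝ) := fun t => Nat.rec x0 (fun _ x => f x (g x)) t
  refine ⟨fun t => g (X t), fun t => hgU _, ?_⟩
  have htraj : ∀ t, traj f x0 (fun t => g (X t)) t = X t := by
    intro t
    induction t with
    | zero => rfl
    | succ t ih => simp only [traj, ih]; rfl
  rintro ⟨t, hXU', hD⟩
  have hpos : ∀ s ≤ t, 0 < B (X s) := by
    intro s hs
    induction s with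
    | zero => exact h3 x0 hx0
    | succ s ih =>
      have hsD : X s ∈ D := by
        rw [← htraj]; exact hD s (Nat.lt_of_succ_le hs)
      have := hstep (X s) hsD
      have hpos' := ih (Nat.le_of_succ_le hs)
      calc (0:ℝ) < lam * B (X s) := mul_pos hlam0 hpos'
        _ ≤ B (X (s+1)) := this
  have : B (X t) ≤ 0 := h2 _ (by rw [← htraj]; exact hXU')
  exact absurd this (not_le.mpr (hpos t le_rfl))
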